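/- For every integer n ≥ 13, the system B_n has exactly 1 + r_4(2 + 2^(2^(n-12))) solutions in integers x_1, …, x_n; that is, the set of tuples (x_1, …, x_n) ∈ ℤ^n satisfying all equations of B_n has cardinality 1 + r_4(2 + 2^(2^(n-12))). -/

import Mathlib

set_option maxHeartbeats 1600000


/-- `r4 m` is the number of representations of `m` as a sum of four squares of integers. -/
noncomputable def r4 (m : ℕ) : ℕ := {a : Fin 4 → ℤ | ∑ i, (a i) ^ 2 = (m : ℤ)}.ncard

/-- The system `B_n` of Browkin, in the unknowns `x 1, …, x n`. -/
def BSys (n : ℕ) (x : ℕ → ℤ) : Prop :=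
  (∀ i, 1 ≤ i → i ≤ n - 13 → x i * x i = x (i + 1)) ∧
  x (n - 11) + x (n - 11) = x 1 ∧
  x (n - 11) * x (n - 11) = x 1 ∧
  x (n - 10) * x (n - 10) = x (n - 9) ∧
  x (n - 8) * x (n - 8) = x (n - 7) ∧
  x (n - 6) * x (n - 6) = x (n - 5) ∧
  x (n - 4) * x (n - 4) = x (n - 3) ∧
  x (n - 9) + x (n - 7) = x (n - 2) ∧
  x (n - 5) + x (n - 3) = x (n - 1) ∧
  x (n - 2) + x (n - 1) = x n ∧
  x (n - 11) + x (n - 12) = x n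

/-- Integer solutions of `B_n`, encoded as functions `ℕ → ℤ` vanishing outside `{1, …, n}`
(so that this set is in natural bijection with the set of solution tuples in `ℤ^n`). -/
def BSet (n : ℕ) : Set (ℕ → ℤ) :=
  {x | (∀ i, i = 0 ∨ n < i → x i = 0) ∧ BSys n x}

/-- The set of representations of `2 + 2 ^ 2 ^ (n - 12)` as a sum of four squares. -/
def SS (n : ℕ) : Set (Fin 4 → ℤ) :=
  {a | ∑ i, (a i) ^ 2 = 2 + 2 ^ 2 ^ (n - 12)}

/-- The nontrivial solution of `B_n` associated to a four-square representation. -/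
def sol (n : ℕ) (a : Fin 4 → ℤ) : ℕ → ℤ := fun j =>
  if j = 0 ∨ n < j then 0
  else if j ≤ n - 12 then 2 ^ 2 ^ j
  else if j = n - 11 then 2
  else if j = n - 10 then a 0
  else if j = n - 9 then (a 0) ^ 2
  else if j = n - 8 then a 1
  else if j = n - 7 then (a 1) ^ 2
  else if j = n - 6 then a 2
  else if j = n - 5 then (a 2) ^ 2
  else if j = n - 4 then a 3
  else if j = n - 3 then (a 3) ^ 2
  else if j = n - 2 then (a 0) ^ 2 + (a 1) ^ 2
  else if j = n - 1 then (a 2) ^ 2 + (a 3) ^ 2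
  else 2 + 2 ^ 2 ^ (n - 12)

section evals
variable {n : ℕ} (hn : 13 ≤ n) (a : Fin 4 → ℤ)

lemma sol_out {j : ℕ} (h : j = 0 ∨ n < j) : sol n a j = 0 := if_pos h

lemma sol_chain {j : ℕ} (h1 : 1 ≤ j) (h2 : j ≤ n - 12) : sol n a j = 2 ^ 2 ^ j := by
  unfold sol; rw [if_neg (by omega), if_pos h2]

include hn

lemma sol_e11 : sol n a (n - 11) = 2 := by
  unfold sol; rw [if_neg (by omega), if_neg (by omega), if_pos rfl]

lemma sol_e10 : sol n a (n - 10) = a 0 := by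
  unfold sol
  rw [if_neg (by omega), if_neg (by omega), if_neg (by omega), if_pos rfl]

lemma sol_e9 : sol n a (n - 9) = (a 0) ^ 2 := by
  unfold sol
  rw [if_neg (by omega), if_neg (by omega), if_neg (by omega), if_neg (by omega), if_pos rfl]

lemma sol_e8 : sol n a (n - 8) = a 1 := by
  unfold sol
  rw [if_neg (by omega), if_neg (by omega), if_neg (by omega), if_neg (by omega),
    if_neg (by omega), if_pos rfl]

lemma sol_e7 : sol n a (n - 7) = (a 1) ^ 2 := by
  unfold sol
  rw [if_neg (by omega), if_neg (by omega), if_neg (by omega), if_neg (by omega),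
    if_neg (by omega), if_neg (by omega), if_pos rfl]

lemma sol_e6 : sol n a (n - 6) = a 2 := by
  unfold sol
  rw [if_neg (by omega), if_neg (by omega), if_neg (by omega), if_neg (by omega),
    if_neg (by omega), if_neg (by omega), if_neg (by omega), if_pos rfl]

lemma sol_e5 : sol n a (n - 5) = (a 2) ^ 2 := by
  unfold sol
  rw [if_neg (by omega), if_neg (by omega), if_neg (by omega), if_neg (by omega),
    if_neg (by omega), if_neg (by omega), if_neg (by omega), if_neg (by omega), if_pos rfl]

lemma sol_e4 : sol n a (n - 4) = a 3 := by
  unfold sol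
  rw [if_neg (by omega), if_neg (by omega), if_neg (by omega), if_neg (by omega),
    if_neg (by omega), if_neg (by omega), if_neg (by omega), if_neg (by omega),
    if_neg (by omega), if_pos rfl]

lemma sol_e3 : sol n a (n - 3) = (a 3) ^ 2 := by
  unfold sol
  rw [if_neg (by omega), if_neg (by omega), if_neg (by omega), if_neg (by omega),
    if_neg (by omega), if_neg (by omega), if_neg (by omega), if_neg (by omega),
    if_neg (by omega), if_neg (by omega), if_pos rfl]

lemma sol_e2 : sol n a (n - 2) = (a 0) ^ 2 + (a 1) ^ 2 := by
  unfold sol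
  rw [if_neg (by omega), if_neg (by omega), if_neg (by omega), if_neg (by omega),
    if_neg (by omega), if_neg (by omega), if_neg (by omega), if_neg (by omega),
    if_neg (by omega), if_neg (by omega), if_neg (by omega), if_pos rfl]

lemma sol_e1 : sol n a (n - 1) = (a 2) ^ 2 + (a 3) ^ 2 := by
  unfold sol
  rw [if_neg (by omega), if_neg (by omega), if_neg (by omega), if_neg (by omega),
    if_neg (by omega), if_neg (by omega), if_neg (by omega), if_neg (by omega),
    if_neg (by omega), if_neg (by omega), if_neg (by omega), if_neg (by omega), if_pos rfl]

lemma sol_e0 : sol n a n = 2 + 2 ^ 2 ^ (n - 12) := by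
  unfold sol
  rw [if_neg (by omega), if_neg (by omega), if_neg (by omega), if_neg (by omega),
    if_neg (by omega), if_neg (by omega), if_neg (by omega), if_neg (by omega),
    if_neg (by omega), if_neg (by omega), if_neg (by omega), if_neg (by omega),
    if_neg (by omega)]

end evals

lemma pow_chain (k : ℕ) : ((2 : ℤ) ^ 2 ^ k) * 2 ^ 2 ^ k = 2 ^ 2 ^ (k + 1) := by
  rw [← pow_add]
  congr 1
  have := pow_succ 2 k
  omega

lemma chain_four {n : ℕ} (hn : 13 ≤ n) (x : ℕ → ℤ)
    (hc : ∀ i, 1 ≤ i → i ≤ n - 13 → x i * x i = x (i + 1)) (h1 : x 1 = 4) :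
    ∀ j, 1 ≤ j → j ≤ n - 12 → x j = 2 ^ 2 ^ j := by
  intro j
  induction j with
  | zero => intro h _; exact absurd h (by omega)
  | succ k ih =>
    intro _ hk
    rcases Nat.eq_zero_or_pos k with rfl | hk0
    · rw [h1]; norm_num
    · have e1 := hc k (by omega) (by omega)
      rw [ih (by omega) (by omega)] at e1
      rw [← e1, pow_chain]

lemma chain_zero {n : ℕ} (hn : 13 ≤ n) (x : ℕ → ℤ)
    (hc : ∀ i, 1 ≤ i → i ≤ n - 13 → x i * x i = x (i + 1)) (h1 : x 1 = 0) :
    ∀ j, 1 ≤ j → j ≤ n - 12 → x j = 0 := by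
  intro j
  induction j with
  | zero => intro h _; exact absurd h (by omega)
  | succ k ih =>
    intro _ hk
    rcases Nat.eq_zero_or_pos k with rfl | hk0
    · exact h1
    · have e1 := hc k (by omega) (by omega)
      rw [ih (by omega) (by omega)] at e1
      rw [← e1, mul_zero]

lemma zero_mem_BSet {n : ℕ} (hn : 13 ≤ n) : (0 : ℕ → ℤ) ∈ BSet n := by
  refine ⟨fun i _ => rfl, ?_⟩
  unfold BSys
  norm_num

lemma sol_mem_BSet {n : ℕ} (hn : 13 ≤ n) {a : Fin 4 → ℤ} (ha : a ∈ SS n) :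
    sol n a ∈ BSet n := by
  have hsum : a 0 ^ 2 + a 1 ^ 2 + a 2 ^ 2 + a 3 ^ 2 = 2 + 2 ^ 2 ^ (n - 12) := by
    have := ha
    rwa [SS, Set.mem_setOf_eq, Fin.sum_univ_four] at this
  refine ⟨fun i h => sol_out a h, ?_, ?_, ?_, ?_, ?_, ?_, ?_, ?_, ?_, ?_, ?_⟩
  · intro i h1 h2
    rw [sol_chain a h1 (by omega), sol_chain a (by omega) (by omega), pow_chain]
  · rw [sol_e11 hn a, sol_chain a le_rfl (by omega)]; norm_num
  · rw [sol_e11 hn a, sol_chain a le_rfl (by omega)]; norm_num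
  · rw [sol_e10 hn a, sol_e9 hn a]; ring
  · rw [sol_e8 hn a, sol_e7 hn a]; ring
  · rw [sol_e6 hn a, sol_e5 hn a]; ring
  · rw [sol_e4 hn a, sol_e3 hn a]; ring
  · rw [sol_e9 hn a, sol_e7 hn a, sol_e2 hn a]
  · rw [sol_e5 hn a, sol_e3 hn a, sol_e1 hn a]
  · rw [sol_e2 hn a, sol_e1 hn a, sol_e0 hn a]; linarith
  · rw [sol_e11 hn a, sol_e0 hn a, sol_chain a (by omega) (by omega)]

lemma index_cases {n i : ℕ} (hn : 13 ≤ n) (h0 : ¬(i = 0 ∨ n < i)) (h1 : ¬ i ≤ n - 12) :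
    i = n - 11 ∨ i = n - 10 ∨ i = n - 9 ∨ i = n - 8 ∨ i = n - 7 ∨
    i = n - 6 ∨ i = n - 5 ∨ i = n - 4 ∨ i = n - 3 ∨ i = n - 2 ∨ i = n - 1 ∨ i = n := by
  omega

lemma BSet_sub {n : ℕ} (hn : 13 ≤ n) {x : ℕ → ℤ} (hx : x ∈ BSet n) :
    x = 0 ∨ ∃ a ∈ SS n, sol n a = x := by
  obtain ⟨hz, hc, h2, h3, h4, h5, h6, h7, h8, h9, h10, h11⟩ := hx
  have ht : x (n - 11) = 0 ∨ x (n - 11) - 2 = 0 := by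
    apply mul_eq_zero.mp
    linear_combination h3 - h2
  rcases ht with ht | ht
  · -- zero solution
    left
    have hx1 : x 1 = 0 := by rw [ht] at h2; linarith
    have hch := chain_zero hn x hc hx1
    have hxn : x n = 0 := by
      rw [← h11, ht, hch (n - 12) (by omega) le_rfl]; ring
    have hsum : x (n-10) * x (n-10) + x (n-8) * x (n-8) + x (n-6) * x (n-6)
        + x (n-4) * x (n-4) = 0 := by
      rw [h4, h5, h6, h7]; linarith
    have p1 := mul_self_nonneg (x (n-10))
    have p2 := mul_self_nonneg (x (n-8))
    have p3 := mul_self_nonneg (x (n-6))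
    have p4 := mul_self_nonneg (x (n-4))
    have e10 : x (n - 10) = 0 := mul_self_eq_zero.mp (le_antisymm (by linarith) p1)
    have e8 : x (n - 8) = 0 := mul_self_eq_zero.mp (le_antisymm (by linarith) p2)
    have e6 : x (n - 6) = 0 := mul_self_eq_zero.mp (le_antisymm (by linarith) p3)
    have e4 : x (n - 4) = 0 := mul_self_eq_zero.mp (le_antisymm (by linarith) p4)
    have e9 : x (n - 9) = 0 := by rw [← h4, e10]; ring
    have e7 : x (n - 7) = 0 := by rw [← h5, e8]; ring
    have e5 : x (n - 5) = 0 := by rw [← h6, e6]; ring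
    have e3 : x (n - 3) = 0 := by rw [← h7, e4]; ring
    have e2 : x (n - 2) = 0 := by rw [← h8, e9, e7]; ring
    have e1 : x (n - 1) = 0 := by rw [← h9, e5, e3]; ring
    funext i
    show x i = 0
    by_cases hi : i = 0 ∨ n < i
    · exact hz i hi
    · by_cases hile : i ≤ n - 12
      · exact hch i (by omega) hile
      · rcases index_cases hn hi hile with
          rfl | rfl | rfl | rfl | rfl | rfl | rfl | rfl | rfl | rfl | rfl | rfl <;>
          assumption
  · -- nontrivial solution
    right
    have ht2 : x (n - 11) = 2 := by linarith
    have hx1 : x 1 = 4 := by rw [ht2] at h2; linarith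
    have hch := chain_four hn x hc hx1
    have hxn : x n = 2 + 2 ^ 2 ^ (n - 12) := by
      rw [← h11, ht2, hch (n - 12) (by omega) le_rfl]
    refine ⟨![x (n-10), x (n-8), x (n-6), x (n-4)], ?_, ?_⟩
    · show _ = _
      rw [Fin.sum_univ_four]
      simp only [Matrix.cons_val_zero, Matrix.cons_val_one, Matrix.head_cons,
        Matrix.cons_val_two, Matrix.tail_cons, Matrix.cons_val_three]
      have : x (n-10) ^ 2 + x (n-8) ^ 2 + x (n-6) ^ 2 + x (n-4) ^ 2
          = x (n-9) + x (n-7) + x (n-5) + x (n-3) := by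
        rw [← h4, ← h5, ← h6, ← h7]; ring
      rw [this, ← hxn, ← h10, ← h8, ← h9]; ring
    · funext j
      by_cases hj : j = 0 ∨ n < j
      · rw [sol_out _ hj, hz j hj]
      · by_cases hjle : j ≤ n - 12
        · rw [sol_chain _ (by omega) hjle, hch j (by omega) hjle]
        · rcases index_cases hn hj hjle with
            rfl | rfl | rfl | rfl | rfl | rfl | rfl | rfl | rfl | rfl | rfl | rfl
          · rw [sol_e11 hn, ht2]
          · rw [sol_e10 hn]; simp
          · rw [sol_e9 hn]; simp; rw [sq]; exact h4
          · rw [sol_e8 hn]; simp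
          · rw [sol_e7 hn]; simp; rw [sq]; exact h5
          · rw [sol_e6 hn]; simp
          · rw [sol_e5 hn]; simp; rw [sq]; exact h6
          · rw [sol_e4 hn]; simp
          · rw [sol_e3 hn]; simp; rw [sq]; exact h7
          · rw [sol_e2 hn]; simp; rw [← h8, ← h4, ← h5]; ring
          · rw [sol_e1 hn]; simp; rw [← h9, ← h6, ← h7]; ring
          · rw [sol_e0 hn, hxn]

lemma SS_finite (n : ℕ) : (SS n).Finite := by
  have hsub : SS n ⊆ Set.pi Set.univ
      (fun _ : Fin 4 => Set.Icc (-(2 + 2 ^ 2 ^ (n - 12) : ℤ)) (2 + 2 ^ 2 ^ (n - 12))) := by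
    intro a ha i _
    have ha' : ∑ i, a i ^ 2 = (2 + 2 ^ 2 ^ (n - 12) : ℤ) := ha
    have hle : a i ^ 2 ≤ (2 + 2 ^ 2 ^ (n - 12) : ℤ) := by
      rw [← ha']
      exact Finset.single_le_sum (f := fun i => a i ^ 2) (fun j _ => sq_nonneg _)
        (Finset.mem_univ i)
    have hM0 : (1 : ℤ) ≤ 2 + 2 ^ 2 ^ (n - 12) := by
      have : (0 : ℤ) < 2 ^ 2 ^ (n - 12) := by positivity
      linarith
    constructor
    · nlinarith [sq_nonneg (a i + 1)]
    · nlinarith [sq_nonneg (a i - 1)]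
  exact Set.Finite.subset (Set.Finite.pi fun _ => Set.finite_Icc _ _) hsub

lemma sol_injOn {n : ℕ} (hn : 13 ≤ n) : Set.InjOn (sol n) (SS n) := by
  intro a _ b _ h
  funext i
  fin_cases i
  · have := congrFun h (n - 10); rwa [sol_e10 hn, sol_e10 hn] at this
  · have := congrFun h (n - 8); rwa [sol_e8 hn, sol_e8 hn] at this
  · have := congrFun h (n - 6); rwa [sol_e6 hn, sol_e6 hn] at this
  · have := congrFun h (n - 4); rwa [sol_e4 hn, sol_e4 hn] at this

theorem stmt0 (n : ℕ) (hn : 13 ≤ n) :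
    (BSet n).ncard = 1 + r4 (2 + 2 ^ 2 ^ (n - 12)) := by
  have hset : BSet n = insert (0 : ℕ → ℤ) (sol n '' SS n) := by
    ext x
    constructor
    · intro hx
      rcases BSet_sub hn hx with rfl | ⟨a, ha, hsa⟩
      · exact Set.mem_insert _ _
      · exact Set.mem_insert_of_mem _ ⟨a, ha, hsa⟩
    · intro hx
      rcases hx with rfl | ⟨a, ha, rfl⟩
      · exact zero_mem_BSet hn
      · exact sol_mem_BSet hn ha
  have hnot : (0 : ℕ → ℤ) ∉ sol n '' SS n := by
    rintro ⟨a, _, ha⟩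
    have := congrFun ha (n - 11)
    rw [sol_e11 hn] at this
    exact two_ne_zero this
  have hr4 : r4 (2 + 2 ^ 2 ^ (n - 12)) = (SS n).ncard := by
    unfold r4 SS
    congr 1
  rw [hset, Set.ncard_insert_of_notMem hnot ((SS_finite n).image _),
    Set.ncard_image_of_injOn (sol_injOn hn), hr4]
  omega
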